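/- arXiv:1302.4333 — 2 statements merged into one kernel-verified Lean document; each statement's English description precedes it below -/
import Mathlib

section
/- Let f be monostable and s : [L, ∞) → [0,1] a bounded C² solution of s'' + f(s) = 0 with s(L) = β ∈ (0,1] and 0 < s(x) ≤ 1. Then lim_{x→∞} s(x) = 1. -/
open Set Filter

/-- If `g' ≤ c` on `Ici a` then `g x ≤ g a + c * (x - a)` for `x ≥ a`. -/
lemma aux_lin_bound (g g' : ℝ → ℝ) (a c : ℝ)
    (hg : ∀ x ∈ Set.Ici a, HasDerivAt g (g' x) x)
    (hb : ∀ x ∈ Set.Ici a, g' x ≤ c) {x : ℝ} (hx : a ≤ x) :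
    g x ≤ g a + c * (x - a) := by
  set h : ℝ → ℝ := fun y => g y - c * y with hh
  have hd : ∀ y ∈ Set.Ici a, HasDerivAt h (g' y - c) y := by
    intro y hy
    have : HasDerivAt (fun z : ℝ => c * z) c y := by
      simpa using (hasDerivAt_id y).const_mul c
    exact (hg y hy).sub this
  have hanti : AntitoneOn h (Set.Ici a) := by
    apply antitoneOn_of_deriv_nonpos (convex_Ici a)
    · intro y hy
      exact (hd y hy).continuousAt.continuousWithinAt
    · intro y hy
      rw [interior_Ici] at hy
      exact (hd y (Set.mem_Ici.mpr (le_of_lt (Set.mem_Ioi.mp hy)))).differentiableAt.differentiableWithinAt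
    · intro y hy
      rw [interior_Ici] at hy
      rw [(hd y (Set.mem_Ici.mpr (le_of_lt (Set.mem_Ioi.mp hy)))).deriv]
      have := hb y (Set.mem_Ici.mpr (le_of_lt (Set.mem_Ioi.mp hy)))
      linarith
  have := hanti (self_mem_Ici) hx hx
  simp only [hh] at this
  linarith

theorem stmt_17 (f : ℝ → ℝ) (L β₀ : ℝ) (hf : Continuous f)
    (hf0 : f 0 = 0) (hf1 : f 1 = 0)
    (hpos : ∀ u ∈ Set.Ioo (0:ℝ) 1, 0 < f u)
    (s s' : ℝ → ℝ)
    (hds : ∀ x ∈ Set.Ici L, HasDerivAt s (s' x) x)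
    (hds' : ∀ x ∈ Set.Ici L, HasDerivAt s' (-(f (s x))) x)
    (hsL : s L = β₀) (hβ₀ : β₀ ∈ Set.Ioc (0:ℝ) 1)
    (hrange : ∀ x ∈ Set.Ici L, 0 < s x ∧ s x ≤ 1) :
    Filter.Tendsto s Filter.atTop (nhds 1) := by
  -- f(s x) ≥ 0
  have hfs : ∀ x ∈ Set.Ici L, 0 ≤ f (s x) := by
    intro x hx
    rcases lt_or_eq_of_le (hrange x hx).2 with h | h
    · exact le_of_lt (hpos _ ⟨(hrange x hx).1, h⟩)
    · rw [h, hf1]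
  -- s' is antitone: for L ≤ a ≤ x, s' x ≤ s' a
  have hs'anti : ∀ a ∈ Set.Ici L, ∀ x, a ≤ x → s' x ≤ s' a := by
    intro a ha x hx
    have := aux_lin_bound s' (fun y => -(f (s y))) a 0
      (fun y hy => hds' y (Set.mem_Ici.mpr (le_trans (Set.mem_Ici.mp ha) (Set.mem_Ici.mp hy))))
      (fun y hy => by
        show -(f (s y)) ≤ 0
        have := hfs y (Set.mem_Ici.mpr (le_trans (Set.mem_Ici.mp ha) (Set.mem_Ici.mp hy))); linarith) hx
    linarith
  -- s' ≥ 0 on Ici L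
  have hs'nn : ∀ x ∈ Set.Ici L, 0 ≤ s' x := by
    intro x₀ hx₀
    by_contra hneg
    push_neg at hneg
    have hcneg : s' x₀ < 0 := hneg
    have hbnd : ∀ y ∈ Set.Ici x₀, s' y ≤ s' x₀ := fun y hy => hs'anti x₀ hx₀ y hy
    have hyx : x₀ ≤ x₀ + (s x₀ + 1) / (-(s' x₀)) := by
      have h1 : 0 < s x₀ + 1 := by have := (hrange x₀ hx₀).1; linarith
      have h2 : 0 < -(s' x₀) := by linarith
      have := div_pos h1 h2
      linarith
    have hb := aux_lin_bound s s' x₀ (s' x₀)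
      (fun z hz => hds z (Set.mem_Ici.mpr (le_trans (Set.mem_Ici.mp hx₀) (Set.mem_Ici.mp hz)))) hbnd hyx
    have hcy : s' x₀ * (x₀ + (s x₀ + 1) / (-(s' x₀)) - x₀) = -(s x₀ + 1) := by
      have hc0 : s' x₀ ≠ 0 := ne_of_lt hcneg
      have h2 : s' x₀ * ((s x₀ + 1) / -s' x₀) = -(s x₀ + 1) := by
        rw [div_neg, mul_neg, mul_comm, div_mul_cancel₀ _ hc0]
      calc s' x₀ * (x₀ + (s x₀ + 1) / -s' x₀ - x₀)
          = s' x₀ * ((s x₀ + 1) / -s' x₀) := by ring_nf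
        _ = -(s x₀ + 1) := h2
    rw [hcy] at hb
    have := (hrange _ (Set.mem_Ici.mpr (le_trans (Set.mem_Ici.mp hx₀) hyx))).1
    linarith
  -- s monotone on Ici L
  have hmono : ∀ a ∈ Set.Ici L, ∀ x, a ≤ x → s a ≤ s x := by
    intro a ha x hx
    have := aux_lin_bound (fun z => -s z) (fun z => -s' z) a 0
      (fun z hz => (hds z (Set.mem_Ici.mpr (le_trans (Set.mem_Ici.mp ha) (Set.mem_Ici.mp hz)))).neg)
      (fun z hz => by
        show -(s' z) ≤ 0
        have := hs'nn z (Set.mem_Ici.mpr (le_trans (Set.mem_Ici.mp ha) (Set.mem_Ici.mp hz))); linarith) hx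
    linarith
  -- T x = s (max x L) is monotone, bounded
  set T : ℝ → ℝ := fun x => s (max x L) with hT
  have hTmono : Monotone T := by
    intro a b hab
    exact hmono (max a L) (Set.mem_Ici.mpr (le_max_right _ _)) (max b L) (max_le_max hab le_rfl)
  have hTbdd : BddAbove (Set.range T) := by
    refine ⟨1, ?_⟩
    rintro _ ⟨x, rfl⟩
    exact (hrange (max x L) (Set.mem_Ici.mpr (le_max_right _ _))).2
  set ℓ : ℝ := ⨆ x, T x with hℓ
  have hTtend : Tendsto T atTop (nhds ℓ) := tendsto_atTop_ciSup hTmono hTbdd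
  have heq : s =ᶠ[atTop] T := by
    filter_upwards [eventually_ge_atTop L] with x hx
    simp [hT, max_eq_left hx]
  have hstend : Tendsto s atTop (nhds ℓ) := hTtend.congr' heq.symm
  -- s x ≤ ℓ for x ≥ L
  have hsle : ∀ x ∈ Set.Ici L, s x ≤ ℓ := by
    intro x hx
    have h1 : T x ≤ ℓ := le_ciSup hTbdd x
    have h2 : T x = s x := by simp [hT, max_eq_left (Set.mem_Ici.mp hx)]
    linarith
  have hℓ1 : ℓ ≤ 1 := ciSup_le fun x => (hrange (max x L) (Set.mem_Ici.mpr (le_max_right _ _))).2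
  have hβℓ : β₀ ≤ ℓ := by
    have := hsle L self_mem_Ici
    rwa [hsL] at this
  -- ℓ = 1
  have hℓeq : ℓ = 1 := by
    by_contra hne
    have hℓlt : ℓ < 1 := lt_of_le_of_ne hℓ1 hne
    obtain ⟨u₀, hu₀, hmin⟩ := (isCompact_Icc (a := β₀) (b := ℓ)).exists_isMinOn
      ⟨β₀, le_refl _, hβℓ⟩ hf.continuousOn
    have hm : 0 < f u₀ := hpos u₀ ⟨lt_of_lt_of_le hβ₀.1 hu₀.1, lt_of_le_of_lt hu₀.2 hℓlt⟩
    have hbnd : ∀ x ∈ Set.Ici L, -(f (s x)) ≤ -(f u₀) := by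
      intro x hx
      have hmem : s x ∈ Set.Icc β₀ ℓ := by
        constructor
        · have := hmono L self_mem_Ici x hx; rw [hsL] at this; linarith
        · exact hsle x hx
      have h2 : f u₀ ≤ f (s x) := hmin hmem
      linarith
    have hx₁L : L ≤ L + (s' L + 1) / f u₀ := by
      have h1 : 0 < s' L + 1 := by have := hs'nn L self_mem_Ici; linarith
      have := div_pos h1 hm
      linarith
    have hb := aux_lin_bound s' (fun y => -(f (s y))) L (-(f u₀)) hds' hbnd hx₁L
    have hcy : -(f u₀) * (L + (s' L + 1) / f u₀ - L) = -(s' L + 1) := by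
      have : f u₀ ≠ 0 := ne_of_gt hm
      field_simp
      ring
    rw [hcy] at hb
    have := hs'nn _ hx₁L
    linarith
  rwa [hℓeq] at hstend
end

section
/- Define f(s) = -s + α(1 - e^{-β(s - s_b)}) for s ≥ s_b and f(s) = -s for s < s_b, with α, β > 0 and 0 < s_b. Assume f(1) = 0 and f'(0) = -1 < 0. Then f(0) = 0, and if additionally there exists a ∈ (s_b, 1) with f(a) = 0 and αβ e^{-β(a - s_b)} > 1, then f has exactly three zeros 0, a, 1 on [0,1] and f < 0 on (0,a), f > 0 on (a,1). -/
theorem stmt_18 (α β s_b a : ℝ) (hα : 0 < α) (hβ : 0 < β)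
    (hsb0 : 0 < s_b) (hsb1 : s_b < 1)
    (f : ℝ → ℝ)
    (hf : ∀ s, f s = if s < s_b then -s else -s + α * (1 - Real.exp (-β * (s - s_b))))
    (hf1 : f 1 = 0)
    (ha : a ∈ Set.Ioo s_b 1) (hfa : f a = 0)
    (hslope : 1 < α * β * Real.exp (-β * (a - s_b)))
    (hf1' : α * β * Real.exp (-β * (1 - s_b)) < 1) :
    f 0 = 0 ∧
    (∀ s ∈ Set.Icc (0:ℝ) 1, f s = 0 ↔ (s = 0 ∨ s = a ∨ s = 1)) ∧
    (∀ s ∈ Set.Ioo 0 a, f s < 0) ∧ (∀ s ∈ Set.Ioo a 1, 0 < f s) := by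
  obtain ⟨ha1, ha2⟩ := ha
  set g : ℝ → ℝ := fun s => -s + α * (1 - Real.exp (-β * (s - s_b))) with hg
  have hfg : ∀ s, s_b ≤ s → f s = g s := by
    intro s hs
    rw [hf, if_neg (not_lt.2 hs)]
  have hg1 : g 1 = 0 := by rw [← hfg 1 hsb1.le]; exact hf1
  have hga : g a = 0 := by rw [← hfg a ha1.le]; exact hfa
  have haff : ∀ x : ℝ, HasDerivAt (fun s : ℝ => -β * (s - s_b)) (-β) x := by
    intro x
    simpa using ((hasDerivAt_id x).sub_const s_b).const_mul (-β)
  have hd : ∀ x : ℝ, HasDerivAt g (-1 + α * β * Real.exp (-β * (x - s_b))) x := by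
    intro x
    have h3 : HasDerivAt g (-1 + α * (0 - Real.exp (-β * (x - s_b)) * (-β))) x :=
      (hasDerivAt_id x).neg.add (((hasDerivAt_const x (1:ℝ)).sub (haff x).exp).const_mul α)
    convert h3 using 1
    ring
  have hderiv : deriv g = fun x => -1 + α * β * Real.exp (-β * (x - s_b)) :=
    funext fun x => (hd x).deriv
  have hcc : StrictConcaveOn ℝ Set.univ g := by
    apply strictConcaveOn_of_deriv2_neg convex_univ
    · exact Continuous.continuousOn (by continuity)
    · intro x hx
      have hdd : HasDerivAt (fun x => -1 + α * β * Real.exp (-β * (x - s_b)))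
          (0 + α * β * (Real.exp (-β * (x - s_b)) * (-β))) x :=
        (hasDerivAt_const x (-1:ℝ)).add ((haff x).exp.const_mul (α * β))
      have h2 : deriv (deriv g) x = 0 + α * β * (Real.exp (-β * (x - s_b)) * (-β)) := by
        rw [hderiv]; exact hdd.deriv
      have : deriv^[2] g x = deriv (deriv g) x := by
        simp [Function.iterate_succ, Function.comp]
      rw [this, h2]
      have he : 0 < Real.exp (-β * (x - s_b)) := Real.exp_pos _
      nlinarith [mul_pos (mul_pos hα hβ) (mul_pos he hβ)]
  -- positivity on (a, 1)
  have key_pos : ∀ s, a < s → s < 1 → 0 < g s := by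
    intro s h1 h2
    have h1a : (0:ℝ) < 1 - a := by linarith
    set t : ℝ := (1 - s) / (1 - a) with ht
    have ht0 : 0 < t := div_pos (by linarith) h1a
    have ht1 : t < 1 := (div_lt_one h1a).2 (by linarith)
    have hcomb : t * a + (1 - t) * 1 = s := by
      rw [ht]; field_simp
      ring
    have := hcc.2 (Set.mem_univ a) (Set.mem_univ 1) (by intro h; linarith)
      ht0 (by linarith : (0:ℝ) < 1 - t) (by ring)
    simp only [smul_eq_mul, hcomb, hga, hg1] at this
    linarith
  -- negativity on [s_b, a)
  have key_neg : ∀ s, s_b ≤ s → s < a → g s < 0 := by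
    intro s hs h2
    have h1s : (0:ℝ) < 1 - s := by linarith
    set t : ℝ := (1 - a) / (1 - s) with ht
    have ht0 : 0 < t := div_pos (by linarith) h1s
    have ht1 : t < 1 := (div_lt_one h1s).2 (by linarith)
    have hcomb : t * s + (1 - t) * 1 = a := by
      rw [ht]; field_simp
      ring
    have := hcc.2 (Set.mem_univ s) (Set.mem_univ 1) (by intro h; linarith)
      ht0 (by linarith : (0:ℝ) < 1 - t) (by ring)
    simp only [smul_eq_mul, hcomb, hga, hg1] at this
    nlinarith
  have hneg : ∀ s ∈ Set.Ioo (0:ℝ) a, f s < 0 := by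
    rintro s ⟨h0, h2⟩
    by_cases hc : s < s_b
    · rw [hf, if_pos hc]; linarith
    · rw [hfg s (not_lt.1 hc)]
      exact key_neg s (not_lt.1 hc) h2
  have hpos : ∀ s ∈ Set.Ioo a 1, 0 < f s := by
    rintro s ⟨h1, h2⟩
    rw [hfg s (by linarith)]
    exact key_pos s h1 h2
  have hf0 : f 0 = 0 := by rw [hf, if_pos hsb0]; ring
  refine ⟨hf0, ?_, hneg, hpos⟩
  rintro s ⟨hs0, hs1⟩
  constructor
  · intro hz
    by_contra hcon
    push_neg at hcon
    obtain ⟨h0, hA, h1⟩ := hcon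
    rcases lt_trichotomy s a with h | h | h
    · have := hneg s ⟨lt_of_le_of_ne hs0 (Ne.symm h0), h⟩
      linarith
    · exact hA h
    · have := hpos s ⟨h, lt_of_le_of_ne hs1 h1⟩
      linarith
  · rintro (rfl | rfl | rfl)
    · exact hf0
    · exact hfa
    · exact hf1
end
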